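/- For every real a > 1, every integer m ≥ 1 and every x ≥ 0, the first central moment satisfies Λ¹_m(x) ≤ 1/(2m). -/

import Mathlib

open Real MeasureTheory Filter

/-- The modified Szász–Mirakjan–Kantorovich operator of Mishra and Yadav. -/
noncomputable def szaszKant (a : ℝ) (m : ℕ) (f : ℝ → ℝ) (x : ℝ) : ℝ :=
  (m : ℝ) * ∑' k : ℕ,
    Real.exp (-(x * Real.log a / (a ^ ((1 : ℝ) / (m : ℝ)) - 1))) *
      (x * Real.log a / (a ^ ((1 : ℝ) / (m : ℝ)) - 1)) ^ k / (Nat.factorial k : ℝ) *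
      ∫ t in ((k : ℝ) / (m : ℝ))..(((k : ℝ) + 1) / (m : ℝ)), f t

/-- The `n`-th central moment of the operator. -/
noncomputable def szaszKantCM (a : ℝ) (m : ℕ) (n : ℕ) (x : ℝ) : ℝ :=
  szaszKant a m (fun t => (t - x) ^ n) x

lemma tsum_exp_aux (y : ℝ) : ∑' k : ℕ, y ^ k / (Nat.factorial k : ℝ) = Real.exp y := by
  rw [Real.exp_eq_exp_ℝ, NormedSpace.exp_eq_tsum_div]

lemma summable_mul_pow_div_factorial (y : ℝ) :
    Summable (fun k : ℕ => (k : ℝ) * y ^ k / (Nat.factorial k : ℝ)) := by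
  rw [← summable_nat_add_iff 1]
  have : (fun k : ℕ => ((k + 1 : ℕ) : ℝ) * y ^ (k + 1) / (Nat.factorial (k + 1) : ℝ))
      = fun k : ℕ => y * (y ^ k / (Nat.factorial k : ℝ)) := by
    funext k
    have h : (Nat.factorial (k + 1) : ℝ) = ((k : ℝ) + 1) * (Nat.factorial k : ℝ) := by
      rw [Nat.factorial_succ]; push_cast; ring
    rw [h]
    have hk : ((k : ℝ) + 1) ≠ 0 := by positivity
    have hf : (Nat.factorial k : ℝ) ≠ 0 := by positivity
    field_simp
    push_cast; ring
  rw [this]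
  exact (Real.summable_pow_div_factorial y).mul_left y

lemma tsum_mul_pow_div_factorial (y : ℝ) :
    ∑' k : ℕ, (k : ℝ) * y ^ k / (Nat.factorial k : ℝ) = y * Real.exp y := by
  rw [Summable.tsum_eq_zero_add (summable_mul_pow_div_factorial y)]
  simp only [Nat.cast_zero, zero_mul, zero_div, zero_add]
  have : (fun k : ℕ => ((k : ℝ) + 1) * y ^ (k + 1) / (Nat.factorial (k + 1) : ℝ))
      = fun k : ℕ => y * (y ^ k / (Nat.factorial k : ℝ)) := by
    funext k
    have h : (Nat.factorial (k + 1) : ℝ) = ((k : ℝ) + 1) * (Nat.factorial k : ℝ) := by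
      rw [Nat.factorial_succ]; push_cast; ring
    rw [h]
    have hk : ((k : ℝ) + 1) ≠ 0 := by positivity
    have hf : (Nat.factorial k : ℝ) ≠ 0 := by positivity
    field_simp
    ring
  push_cast
  rw [this, tsum_mul_left, tsum_exp_aux]

theorem szaszKantCM_one_le (a : ℝ) (ha : 1 < a) (m : ℕ) (hm : 1 ≤ m)
    (x : ℝ) (hx : 0 ≤ x) :
    szaszKantCM a m 1 x ≤ 1 / (2 * (m : ℝ)) := by
  have hm0 : (0:ℝ) < (m : ℝ) := by exact_mod_cast hm
  have ha0 : (0:ℝ) < a := by linarith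
  set b : ℝ := a ^ ((1 : ℝ) / (m : ℝ)) with hbdef
  have hb1 : 1 < b := by
    rw [hbdef]
    rw [Real.one_lt_rpow_iff_of_pos ha0]
    left; exact ⟨ha, by positivity⟩
  set y : ℝ := x * Real.log a / (b - 1) with hydef
  have hy : 0 ≤ y := by
    apply div_nonneg (mul_nonneg hx (Real.log_nonneg ha.le)); linarith
  -- compute the integral
  have hint : ∀ k : ℕ, (∫ t in ((k : ℝ) / (m : ℝ))..(((k : ℝ) + 1) / (m : ℝ)), (t - x) ^ 1)
      = (k : ℝ) / (m : ℝ) ^ 2 + (1 / (2 * (m : ℝ) ^ 2) - x / (m : ℝ)) := by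
    intro k
    simp only [pow_one]
    have h1 : (∫ t in ((k : ℝ) / (m : ℝ))..(((k : ℝ) + 1) / (m : ℝ)), (t - x))
        = ∫ t in ((k : ℝ) / (m : ℝ) - x)..(((k : ℝ) + 1) / (m : ℝ) - x), t :=
      intervalIntegral.integral_comp_sub_right (fun t => t) x
    rw [h1, integral_id]
    field_simp
    ring
  -- rewrite the central moment
  have hA := Real.summable_pow_div_factorial y
  have hB := summable_mul_pow_div_factorial y
  have key : szaszKantCM a m 1 x = y / (m : ℝ) + 1 / (2 * (m : ℝ)) - x := by
    unfold szaszKantCM szaszKant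
    rw [← hbdef, ← hydef]
    have hterm : ∀ k : ℕ,
        Real.exp (-y) * y ^ k / (Nat.factorial k : ℝ) *
          (∫ t in ((k : ℝ) / (m : ℝ))..(((k : ℝ) + 1) / (m : ℝ)), (t - x) ^ 1)
        = (Real.exp (-y) / (m : ℝ) ^ 2) * ((k : ℝ) * y ^ k / (Nat.factorial k : ℝ))
          + (Real.exp (-y) * (1 / (2 * (m : ℝ) ^ 2) - x / (m : ℝ)))
            * (y ^ k / (Nat.factorial k : ℝ)) := by
      intro k
      rw [hint k]
      field_simp
    rw [tsum_congr hterm, Summable.tsum_add (hB.mul_left _) (hA.mul_left _),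
      tsum_mul_left, tsum_mul_left, tsum_mul_pow_div_factorial, tsum_exp_aux]
    rw [Real.exp_neg]
    have h1 : Real.exp y ≠ 0 := (Real.exp_pos y).ne'
    field_simp
    ring
  rw [key]
  -- show y / m ≤ x
  have hlog : Real.log a = (m : ℝ) * Real.log b := by
    have : b ^ (m : ℝ) = a := by
      rw [hbdef, ← Real.rpow_mul ha0.le]
      rw [one_div, inv_mul_cancel₀ hm0.ne']
      exact Real.rpow_one a
    rw [← this, Real.log_rpow (by linarith)]
  have hlb : Real.log b ≤ b - 1 := Real.log_le_sub_one_of_pos (by linarith)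
  have hym : y ≤ (m : ℝ) * x := by
    rw [hydef, div_le_iff₀ (by linarith : (0:ℝ) < b - 1), hlog]
    nlinarith [mul_le_mul_of_nonneg_left hlb (mul_nonneg hm0.le hx)]
  have : y / (m : ℝ) ≤ x := by
    rw [div_le_iff₀ hm0]
    nlinarith
  linarith
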